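/- Let ζ = exp(2πi/n) and let I = (i_1,...,i_d) and Î = (î_1,...,î_c) be a partition of the exponents such that {ζ^{i_1},...,ζ^{i_d}, ζ^{î_1},...,ζ^{î_c}} is the full set of n-th roots of (-1)^{d+1} (with n = c+d). Then for every k with 1 ≤ k ≤ d, E_k(ζ^{-i_1},...,ζ^{-i_d}) = H_k(ζ^{n/2 - î_1},...,ζ^{n/2 - î_c}), where E_k is the k-th elementary symmetric polynomial and H_k the k-th complete homogeneous symmetric polynomial. -/

import Mathlib

noncomputable section

/-- Complete homogeneous symmetric polynomial of degree `m` in `d` variables. -/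
def Hpoly (d m : ℕ) (z : Fin d → ℂ) : ℂ :=
  ∑ α ∈ Finset.Nat.antidiagonalTuple d m, ∏ i, z i ^ α i

/-- Elementary symmetric polynomial `E_k` in `d` variables. -/
def Epoly (d k : ℕ) (z : Fin d → ℂ) : ℂ :=
  ∑ s ∈ (Finset.univ : Finset (Fin d)).powersetCard k, ∏ i ∈ s, z i

open Polynomial in
lemma aux_coeff_prod_one_add {ι : Type*} [DecidableEq ι] (s : Finset ι) (u : ι → ℂ) :
    ∀ k : ℕ, (∏ i ∈ s, (1 + C (u i) * X)).coeff k = ∑ t ∈ s.powersetCard k, ∏ i ∈ t, u i := by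
  induction s using Finset.induction with
  | empty =>
    intro k
    cases k with
    | zero => simp
    | succ k =>
      rw [Finset.powersetCard_eq_empty.2 (by simp), Finset.sum_empty]
      simp [Polynomial.coeff_one]
  | @insert a s ha ih =>
    intro k
    rw [Finset.prod_insert ha, add_mul, one_mul, coeff_add]
    cases k with
    | zero =>
      have h0 : (C (u a) * X * ∏ i ∈ s, (1 + C (u i) * X)).coeff 0 = 0 := by
        rw [mul_assoc, coeff_C_mul, mul_coeff_zero, coeff_X_zero, zero_mul, mul_zero]
      rw [h0, add_zero, ih 0]
      simp
    | succ k =>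
      have h1 : (C (u a) * X * ∏ i ∈ s, (1 + C (u i) * X)).coeff (k + 1)
          = u a * (∏ i ∈ s, (1 + C (u i) * X)).coeff k := by
        rw [mul_assoc, coeff_C_mul, coeff_X_mul]
      rw [h1, ih, ih, Finset.powersetCard_succ_insert ha]
      rw [Finset.sum_union]
      · congr 1
        rw [Finset.sum_image (fun t₁ h₁ t₂ h₂ h => by
          have ha1 : a ∉ t₁ := fun hm => ha ((Finset.mem_powersetCard.1 h₁).1 hm)
          have ha2 : a ∉ t₂ := fun hm => ha ((Finset.mem_powersetCard.1 h₂).1 hm)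
          rw [← Finset.erase_insert ha1, ← Finset.erase_insert ha2, h]), Finset.mul_sum]
        refine Finset.sum_congr rfl fun t ht => ?_
        have hat : a ∉ t := fun hm => ha ((Finset.mem_powersetCard.1 ht).1 hm)
        rw [Finset.prod_insert hat]
      · rw [Finset.disjoint_left]
        intro t ht1 ht2
        have h1 : a ∉ t := fun hm => ha ((Finset.mem_powersetCard.1 ht1).1 hm)
        obtain ⟨t', _, rfl⟩ := Finset.mem_image.1 ht2
        exact h1 (Finset.mem_insert_self a t')

open Polynomial in
lemma aux_prod_X_sub_C {ι : Type*} [Fintype ι] [DecidableEq ι] {n : ℕ} (hn : 0 < n)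
    (hcard : Fintype.card ι = n) (a : ℂ) (u : ι → ℂ) (hu : Function.Injective u)
    (h : ∀ i, u i ^ n = a) : ∏ i, (X - C (u i)) = X ^ n - C a := by
  set f : ℂ[X] := X ^ n - C a with hf
  have hmon : f.Monic := monic_X_pow_sub_C a hn.ne'
  have hf0 : f ≠ 0 := hmon.ne_zero
  have hdeg : f.natDegree = n := natDegree_X_pow_sub_C
  set t : Multiset ℂ := Finset.univ.val.map u with hts
  have hnodup : t.Nodup := Finset.univ.nodup.map hu
  have hle : t ≤ f.roots := by
    refine Multiset.le_iff_count.2 fun x => ?_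
    by_cases hx : x ∈ t
    · rw [Multiset.count_eq_one_of_mem hnodup hx]
      refine Multiset.one_le_count_iff_mem.2 ?_
      obtain ⟨i, _, rfl⟩ := Multiset.mem_map.1 hx
      rw [mem_roots hf0]
      simp [hf, IsRoot, h i]
    · rw [Multiset.count_eq_zero_of_notMem hx]
      exact Nat.zero_le _
  have hcardt : Multiset.card t = n := by
    rw [hts, Multiset.card_map]
    simpa using hcard
  have heq : t = f.roots := by
    refine Multiset.eq_of_le_of_card_le hle ?_
    rw [hcardt]
    exact le_trans (f.card_roots') (le_of_eq hdeg)
  have hsplit : f = (f.roots.map fun r => X - C r).prod :=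
    (IsAlgClosed.splits f).eq_prod_roots_of_monic hmon
  rw [Finset.prod_eq_multiset_prod]
  rw [show (Finset.univ.val.map fun i => X - C (u i)) = t.map fun r => X - C r by
    rw [hts, Multiset.map_map]; rfl]
  rw [heq, ← hsplit]

lemma aux_geom (y : ℂ) :
    ((1 : PowerSeries ℂ) - PowerSeries.C y * PowerSeries.X) *
      PowerSeries.mk (fun m => y ^ m) = 1 := by
  ext k
  cases k with
  | zero => simp
  | succ k =>
    rw [sub_mul, one_mul, map_sub, mul_assoc, PowerSeries.coeff_C_mul,
      PowerSeries.coeff_succ_X_mul, PowerSeries.coeff_mk, PowerSeries.coeff_mk,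
      PowerSeries.coeff_one]
    simp [pow_succ, mul_comm]

lemma aux_mk_H (c : ℕ) (y : Fin c → ℂ) :
    PowerSeries.mk (fun m => Hpoly c m y) = ∏ l : Fin c, PowerSeries.mk (fun m => y l ^ m) := by
  ext k
  rw [PowerSeries.coeff_mk, PowerSeries.coeff_prod]
  unfold Hpoly
  refine Finset.sum_nbij' (i := fun α => Finsupp.equivFunOnFinite.symm α)
    (j := fun l => (l : Fin c → ℕ)) ?_ ?_ ?_ ?_ ?_
  · intro α hα
    rw [Finset.mem_finsuppAntidiag]
    refine ⟨?_, Finset.subset_univ _⟩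
    rw [← Finset.Nat.mem_antidiagonalTuple.1 hα]
    simp [Finsupp.equivFunOnFinite]
    rfl
  · intro l hl
    rw [Finset.Nat.mem_antidiagonalTuple]
    exact (Finset.mem_finsuppAntidiag.1 hl).1
  · intro α _
    exact Finsupp.equivFunOnFinite.apply_symm_apply α
  · intro l _
    simp
  · intro α _
    have hcoe : ⇑(Finsupp.equivFunOnFinite.symm α) = α :=
      Finsupp.equivFunOnFinite.apply_symm_apply α
    simp [PowerSeries.coeff_mk, hcoe]


open Polynomial in
/-- If `ζ^{i_1},…,ζ^{i_d},ζ^{î_1},…,ζ^{î_c}` enumerates all `n`-th roots of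
`(-1)^{d+1}` (here `z j = ζ^{i_j}` and `w l = ζ^{î_l}`, `n = c + d`), then
`E_k(ζ^{-i_1},…,ζ^{-i_d}) = H_k(ζ^{n/2-î_1},…,ζ^{n/2-î_c})` for `1 ≤ k ≤ d`.
Note `ζ^{n/2 - î_l} = -ζ^{-î_l} = -(w l)⁻¹`. -/
theorem stmt6 (c d n : ℕ) (hn : n = c + d) (hd : 1 ≤ d) (hc : 1 ≤ c)
    (z : Fin d → ℂ) (w : Fin c → ℂ)
    (hroots : ∀ x ∈ Set.range z ∪ Set.range w, x ^ n = (-1 : ℂ) ^ (d + 1))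
    (hinj : Function.Injective (Sum.elim z w : Fin d ⊕ Fin c → ℂ))
    (hall : ∀ x : ℂ, x ^ n = (-1 : ℂ) ^ (d + 1) → x ∈ Set.range z ∪ Set.range w) :
    ∀ k, 1 ≤ k → k ≤ d →
      Epoly d k (fun j => (z j)⁻¹) = Hpoly c k (fun l => -(w l)⁻¹) := by
  intro k hk1 hkd
  classical
  have hn0 : n ≠ 0 := by omega
  have hkn : k < n := by omega
  set v : Fin d ⊕ Fin c → ℂ := Sum.elim z w with hv
  have hvroot : ∀ i, v i ^ n = (-1 : ℂ) ^ (d + 1) := by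
    intro i
    apply hroots
    cases i with
    | inl j => exact Set.mem_union_left _ ⟨j, rfl⟩
    | inr l => exact Set.mem_union_right _ ⟨l, rfl⟩
  have hv0 : ∀ i, v i ≠ 0 := by
    intro i hzero
    have h1 := hvroot i
    rw [hzero, zero_pow hn0] at h1
    exact pow_ne_zero (d+1) (by norm_num : (-1:ℂ) ≠ 0) h1.symm
  have hcard : Fintype.card (Fin d ⊕ Fin c) = n := by simp [hn]; omega
  have hprod2 : ∏ i, (X - C (-(v i))) = X ^ n - C (-((-1:ℂ)^c)) := by
    apply aux_prod_X_sub_C (by omega) hcard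
    · exact fun i j hij => hinj (neg_injective hij)
    · intro i
      rw [neg_pow, hvroot i, ← pow_add,
        show n + (d + 1) = 2 * d + c + 1 by omega,
        pow_add, pow_add, pow_mul]
      norm_num
  have hprodv : ∏ i, v i = (-1:ℂ)^c := by
    have h0 := congrArg (Polynomial.eval 0) hprod2
    rw [Polynomial.eval_prod] at h0
    simpa [zero_pow hn0] using h0
  have hprodinv : ∏ i, (v i)⁻¹ = (-1:ℂ)^c := by
    rw [Finset.prod_inv_distrib, hprodv, ← inv_pow, inv_neg, inv_one]
  have hfac : ∀ i, (1 : ℂ[X]) + C (v i)⁻¹ * X = C (v i)⁻¹ * (X - C (-(v i))) := by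
    intro i
    rw [map_neg, sub_neg_eq_add, mul_add, ← C_mul, inv_mul_cancel₀ (hv0 i), C_1]
    ring
  have hP : ∏ i, ((1 : ℂ[X]) + C (v i)⁻¹ * X) = 1 + C ((-1:ℂ)^c) * X ^ n := by
    calc ∏ i, ((1 : ℂ[X]) + C (v i)⁻¹ * X)
        = ∏ i, (C (v i)⁻¹ * (X - C (-(v i)))) := Finset.prod_congr rfl fun i _ => hfac i
      _ = (∏ i, C (v i)⁻¹) * ∏ i, (X - C (-(v i))) := Finset.prod_mul_distrib
      _ = C ((-1:ℂ)^c) * (X ^ n - C (-((-1:ℂ)^c))) := by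
          rw [← map_prod, hprodinv, hprod2]
      _ = 1 + C ((-1:ℂ)^c) * X ^ n := by
          rw [map_neg, sub_neg_eq_add, mul_add, ← C_mul, ← pow_add]
          rw [Even.neg_one_pow ⟨c, rfl⟩, C_1, add_comm]
  have hPQ : (∏ j, ((1 : ℂ[X]) + C (z j)⁻¹ * X)) * (∏ l, ((1 : ℂ[X]) + C (w l)⁻¹ * X))
      = 1 + C ((-1:ℂ)^c) * X ^ n := by
    calc (∏ j, ((1 : ℂ[X]) + C (z j)⁻¹ * X)) * (∏ l, ((1 : ℂ[X]) + C (w l)⁻¹ * X))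
        = ∏ i : Fin d ⊕ Fin c, ((1 : ℂ[X]) + C (v i)⁻¹ * X) := by
          rw [Fintype.prod_sum_type]
          simp only [hv, Sum.elim_inl, Sum.elim_inr]
      _ = _ := hP
  -- power series versions
  have hQG : ((∏ l, ((1:ℂ[X]) + C (w l)⁻¹ * X) : ℂ[X]) : PowerSeries ℂ) *
      (∏ l, PowerSeries.mk fun m => (-(w l)⁻¹) ^ m) = 1 := by
    rw [← Polynomial.coeToPowerSeries.ringHom_apply, map_prod, ← Finset.prod_mul_distrib]
    apply Finset.prod_eq_one
    intro l _
    have h := aux_geom (-(w l)⁻¹)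
    rw [map_neg, neg_mul, sub_neg_eq_add] at h
    rw [← h]
    congr 1
    simp [Polynomial.coeToPowerSeries.ringHom_apply, Polynomial.coe_add, Polynomial.coe_one,
      Polynomial.coe_mul, Polynomial.coe_C, Polynomial.coe_X]
  have hcast : (((∏ j, ((1:ℂ[X]) + C (z j)⁻¹ * X)) : ℂ[X]) : PowerSeries ℂ)
      = (1 + PowerSeries.C ((-1:ℂ)^c) * PowerSeries.X ^ n) *
        ∏ l, PowerSeries.mk fun m => (-(w l)⁻¹) ^ m := by
    calc (((∏ j, ((1:ℂ[X]) + C (z j)⁻¹ * X)) : ℂ[X]) : PowerSeries ℂ)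
        = (((∏ j, ((1:ℂ[X]) + C (z j)⁻¹ * X)) : ℂ[X]) : PowerSeries ℂ) *
          ((((∏ l, ((1:ℂ[X]) + C (w l)⁻¹ * X)) : ℂ[X]) : PowerSeries ℂ) *
            ∏ l, PowerSeries.mk fun m => (-(w l)⁻¹) ^ m) := by rw [hQG, mul_one]
      _ = ((((∏ j, ((1:ℂ[X]) + C (z j)⁻¹ * X)) * (∏ l, ((1:ℂ[X]) + C (w l)⁻¹ * X)) : ℂ[X])) :
            PowerSeries ℂ) * ∏ l, PowerSeries.mk fun m => (-(w l)⁻¹) ^ m := by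
          rw [Polynomial.coe_mul, mul_assoc]
      _ = _ := by
          rw [hPQ]
          congr 1
          simp [Polynomial.coe_add, Polynomial.coe_one, Polynomial.coe_mul, Polynomial.coe_C,
            Polynomial.coe_pow, Polynomial.coe_X]
  have hzero : (PowerSeries.coeff k) ((PowerSeries.C ((-1:ℂ)^c) * PowerSeries.X ^ n) *
      ∏ l, PowerSeries.mk fun m => (-(w l)⁻¹) ^ m) = 0 := by
    refine PowerSeries.X_pow_dvd_iff.1 ⟨PowerSeries.C ((-1:ℂ)^c) *
      ∏ l, PowerSeries.mk fun m => (-(w l)⁻¹) ^ m, by ring⟩ k hkn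
  have hkey := congrArg (PowerSeries.coeff k) hcast
  rw [add_mul, one_mul, map_add, hzero, add_zero, ← aux_mk_H c (fun l => -(w l)⁻¹),
    PowerSeries.coeff_mk, Polynomial.coeff_coe] at hkey
  have hE := aux_coeff_prod_one_add (Finset.univ : Finset (Fin d)) (fun j => (z j)⁻¹) k
  unfold Epoly
  rw [← hE]
  exact hkey
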